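/- arXiv:2501.02556 — 2 statements merged into one kernel-verified Lean document; each statement's English description precedes it below -/
import Mathlib

section
/- For α > 1 and c > 0, ∫₁^∞ ln(1 + c·r^{−α}) dr = −ln(1+c) + (αc/(α−1))·₂F₁(1 − 1/α, 1; 2 − 1/α; −c), where ₂F₁ is the Gauss hypergeometric function. -/
open MeasureTheory Real

/-- The Gauss hypergeometric function `₂F₁(a,b;c;z)`, defined (for the parameter
range used here: `c > b > 0`, `z < 1`) by Euler's integral representation,
which agrees with the analytic continuation of the hypergeometric series. -/
noncomputable def gaussHypergeometric (a b c z : ℝ) : ℝ :=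
  (Real.Gamma c / (Real.Gamma b * Real.Gamma (c - b))) *
    ∫ t in (0:ℝ)..1, t ^ (b - 1) * (1 - t) ^ (c - b - 1) * (1 - z * t) ^ (-a)

section Aux
open Set Filter
open MeasureTheory Real Set Filter

variable {α c : ℝ}

-- key positivity facts
lemma rpow_pos_of_one_lt {r : ℝ} (hr : 1 < r) (y : ℝ) : 0 < r ^ y :=
  Real.rpow_pos_of_pos (by linarith) y

-- g integrable
lemma aux_int_g (hα : 1 < α) (hc : 0 < c) :
    IntegrableOn (fun r : ℝ => α * c / (r ^ α + c)) (Ioi 1) := by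
  have hbound : IntegrableOn (fun r : ℝ => α * c * r ^ (-α)) (Ioi 1) :=
    ((integrableOn_Ioi_rpow_of_lt (by linarith) one_pos).const_mul (α * c))
  refine hbound.mono' ?_ ?_
  · apply ContinuousOn.aestronglyMeasurable ?_ measurableSet_Ioi
    apply ContinuousOn.div continuousOn_const
    · exact (continuousOn_id.rpow_const fun x hx => Or.inl (by rintro rfl; exact absurd hx (by simp))).add continuousOn_const
    · intro x hx
      have : (0:ℝ) < x ^ α := Real.rpow_pos_of_pos (by simp at hx; linarith) α
      positivity
  · filter_upwards [self_mem_ae_restrict measurableSet_Ioi] with r hr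
    have hr1 : (1:ℝ) < r := hr
    have hr0 : (0:ℝ) < r := by linarith
    have hA : (0:ℝ) < r ^ α := Real.rpow_pos_of_pos hr0 α
    have hαc : (0:ℝ) < α * c := by positivity
    rw [Real.norm_eq_abs, abs_of_nonneg (by positivity)]
    rw [Real.rpow_neg hr0.le, div_eq_mul_inv]
    gcongr
    linarith

lemma aux_int_f (hα : 1 < α) (hc : 0 < c) :
    IntegrableOn (fun r : ℝ => Real.log (1 + c * r ^ (-α))) (Ioi 1) := by
  have hbound : IntegrableOn (fun r : ℝ => c * r ^ (-α)) (Ioi 1) :=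
    ((integrableOn_Ioi_rpow_of_lt (by linarith) one_pos).const_mul c)
  refine hbound.mono' ?_ ?_
  · apply ContinuousOn.aestronglyMeasurable ?_ measurableSet_Ioi
    apply ContinuousOn.log
    · exact continuousOn_const.add (continuousOn_const.mul
        (continuousOn_id.rpow_const fun x hx => Or.inl (by rintro rfl; exact absurd hx (by simp))))
    · intro x hx
      have hx1 : (1:ℝ) < x := hx
      have : (0:ℝ) < x ^ (-α) := Real.rpow_pos_of_pos (by linarith) _
      positivity
  · filter_upwards [self_mem_ae_restrict measurableSet_Ioi] with r hr
    have hr1 : (1:ℝ) < r := hr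
    have hr0 : (0:ℝ) < r := by linarith
    have hA : (0:ℝ) < r ^ (-α) := Real.rpow_pos_of_pos hr0 _
    have hpos : (0:ℝ) < 1 + c * r ^ (-α) := by positivity
    rw [Real.norm_eq_abs, abs_of_nonneg (Real.log_nonneg (by nlinarith))]
    have := Real.log_le_sub_one_of_pos hpos
    linarith

lemma aux_derivF (hα : 1 < α) (hc : 0 < c) {r : ℝ} (hr : 1 ≤ r) :
    HasDerivAt (fun x : ℝ => x * Real.log (1 + c * x ^ (-α)))
      (Real.log (1 + c * r ^ (-α)) - α * c / (r ^ α + c)) r := by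
  have hr0 : (0:ℝ) < r := by linarith
  have hA : (0:ℝ) < r ^ (-α) := Real.rpow_pos_of_pos hr0 _
  have hAp : (0:ℝ) < r ^ α := Real.rpow_pos_of_pos hr0 _
  have hpos : (0:ℝ) < 1 + c * r ^ (-α) := by positivity
  have h1 : HasDerivAt (fun x : ℝ => x ^ (-α)) (-α * r ^ (-α - 1)) r :=
    Real.hasDerivAt_rpow_const (Or.inl hr0.ne')
  have h2 : HasDerivAt (fun x : ℝ => 1 + c * x ^ (-α)) (c * (-α * r ^ (-α - 1))) r :=
    (h1.const_mul c).const_add 1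
  have h3 := (h2.log hpos.ne')
  have h4 : HasDerivAt (fun x : ℝ => x * Real.log (1 + c * x ^ (-α)))
      (1 * Real.log (1 + c * r ^ (-α)) + r * (c * (-α * r ^ (-α - 1)) / (1 + c * r ^ (-α)))) r :=
    (hasDerivAt_id' (x := r)).mul h3
  convert h4 using 1
  have e1 : r ^ (-α - 1) = r ^ (-α) / r := by
    rw [Real.rpow_sub hr0, Real.rpow_one]
  have e2 : r ^ (-α) = (r ^ α)⁻¹ := by
    rw [Real.rpow_neg hr0.le]
  rw [e1, e2]
  field_simp
  ring


lemma aux_tendstoF {α c : ℝ} (hα : 1 < α) (hc : 0 < c) :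
    Tendsto (fun r : ℝ => r * Real.log (1 + c * r ^ (-α))) atTop (nhds 0) := by
  have hlim : Tendsto (fun r : ℝ => c * r ^ (1 - α)) atTop (nhds 0) := by
    have := (tendsto_rpow_neg_atTop (by linarith : (0:ℝ) < α - 1)).const_mul c
    simpa [neg_sub, mul_zero] using this.congr (fun r => by rw [neg_sub])
  apply squeeze_zero' (g := fun r : ℝ => c * r ^ (1 - α))
  · filter_upwards [eventually_ge_atTop (1:ℝ)] with r hr
    have hr0 : (0:ℝ) < r := by linarith
    have hA : (0:ℝ) < r ^ (-α) := Real.rpow_pos_of_pos hr0 _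
    have : (0:ℝ) ≤ Real.log (1 + c * r ^ (-α)) := Real.log_nonneg (by nlinarith)
    positivity
  · filter_upwards [eventually_ge_atTop (1:ℝ)] with r hr
    have hr0 : (0:ℝ) < r := by linarith
    have hA : (0:ℝ) < r ^ (-α) := Real.rpow_pos_of_pos hr0 _
    have hpos : (0:ℝ) < 1 + c * r ^ (-α) := by positivity
    have hlog : Real.log (1 + c * r ^ (-α)) ≤ c * r ^ (-α) := by
      have := Real.log_le_sub_one_of_pos hpos; linarith
    calc r * Real.log (1 + c * r ^ (-α)) ≤ r * (c * r ^ (-α)) := by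
          exact mul_le_mul_of_nonneg_left hlog hr0.le
      _ = c * r ^ (1 - α) := by
          rw [show (1:ℝ) - α = 1 + (-α) by ring, Real.rpow_add hr0, Real.rpow_one]; ring
  · exact hlim


lemma aux_subst {α c : ℝ} (hα : 1 < α) (hc : 0 < c) :
    ∫ t in Ioo (0:ℝ) 1, (1 - t) ^ (-(1/α)) * (1 + c * t) ^ (1/α - 1)
      = ∫ r in Ioi (1:ℝ), α / (r ^ α + c) := by
  have hα0 : (0:ℝ) < α := by linarith
  set ψ : ℝ → ℝ := fun r => (r ^ α - 1) / (r ^ α + c) with hψ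
  set ψ' : ℝ → ℝ := fun r => α * r ^ (α - 1) * (1 + c) / (r ^ α + c) ^ 2 with hψ'
  have hApos : ∀ r ∈ Ioi (1:ℝ), (1:ℝ) < r ^ α := fun r hr =>
    Real.one_lt_rpow_iff_of_pos (by linarith [mem_Ioi.mp hr]) |>.mpr (Or.inl ⟨hr, hα0⟩)
  have hderiv : ∀ r ∈ Ioi (1:ℝ), HasDerivAt ψ (ψ' r) r := by
    intro r hr
    have hr1 : (1:ℝ) < r := hr
    have hr0 : (0:ℝ) < r := by linarith
    have hA1 : (1:ℝ) < r ^ α := hApos r hr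
    have hd : HasDerivAt (fun x : ℝ => x ^ α) (α * r ^ (α - 1)) r :=
      Real.hasDerivAt_rpow_const (Or.inl hr0.ne')
    have h1 : HasDerivAt (fun x : ℝ => x ^ α - 1) (α * r ^ (α - 1)) r := hd.sub_const 1
    have h2 : HasDerivAt (fun x : ℝ => x ^ α + c) (α * r ^ (α - 1)) r := hd.add_const c
    have hne : r ^ α + c ≠ 0 := by positivity
    have := h1.div h2 hne
    have heq : ψ' r = (α * r ^ (α - 1) * (r ^ α + c) - (r ^ α - 1) * (α * r ^ (α - 1))) / (r ^ α + c) ^ 2 := by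
      rw [hψ']
      rw [div_eq_div_iff (by positivity) (by positivity)]
      ring
    rw [heq]
    exact this
  have hinj : InjOn ψ (Ioi 1) := by
    apply StrictMonoOn.injOn
    intro r hr s hs hrs
    have hA := hApos r hr
    have hB := hApos s hs
    have hAB : r ^ α < s ^ α :=
      Real.rpow_lt_rpow (by linarith [mem_Ioi.mp hr]) hrs hα0
    have h1 : (0:ℝ) < r ^ α + c := by linarith
    have h2 : (0:ℝ) < s ^ α + c := by linarith
    rw [hψ]
    simp only [div_lt_div_iff₀ h1 h2]
    nlinarith
  have himg : ψ '' Ioi 1 = Ioo 0 1 := by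
    apply Subset.antisymm
    · rintro _ ⟨r, hr, rfl⟩
      have hA := hApos r hr
      have h1 : (0:ℝ) < r ^ α + c := by linarith
      constructor
      · apply div_pos (by linarith) h1
      · rw [div_lt_one h1]; linarith
    · rintro t ⟨ht0, ht1⟩
      have h1t : (0:ℝ) < 1 - t := by linarith
      have hB1 : (1:ℝ) < (1 + c * t) / (1 - t) := by
        rw [lt_div_iff₀ h1t]; nlinarith
      have hB0 : (0:ℝ) < (1 + c * t) / (1 - t) := by linarith
      refine ⟨((1 + c * t) / (1 - t)) ^ α⁻¹, ?_, ?_⟩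
      · exact mem_Ioi.mpr ((Real.one_lt_rpow_iff_of_pos hB0).mpr (Or.inl ⟨hB1, by positivity⟩))
      · have hpow : (((1 + c * t) / (1 - t)) ^ α⁻¹) ^ α = (1 + c * t) / (1 - t) :=
          Real.rpow_inv_rpow hB0.le hα0.ne'
        rw [hψ]
        simp only [hpow]
        rw [div_eq_iff (by positivity : (1 + c*t)/(1-t) + c ≠ 0)]
        field_simp
        ring
  rw [← himg, integral_image_eq_integral_abs_deriv_smul measurableSet_Ioi
      (fun r hr => (hderiv r hr).hasDerivWithinAt) hinj]
  apply setIntegral_congr_fun measurableSet_Ioi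
  intro r hr
  dsimp only
  have hr1 : (1:ℝ) < r := hr
  have hr0 : (0:ℝ) < r := by linarith
  have hA1 : (1:ℝ) < r ^ α := hApos r hr
  have hA0 : (0:ℝ) < r ^ α := by linarith
  have hAc : (0:ℝ) < r ^ α + c := by linarith
  have h1c : (0:ℝ) < 1 + c := by linarith
  have e1 : 1 - ψ r = (1 + c) / (r ^ α + c) := by
    rw [hψ]; field_simp; try ring
  have e2 : 1 + c * ψ r = r ^ α * (1 + c) / (r ^ α + c) := by
    rw [hψ]; field_simp; try ring
  have habs : |ψ' r| = ψ' r := abs_of_pos (by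
    rw [hψ']
    have : (0:ℝ) < r ^ (α-1) := Real.rpow_pos_of_pos hr0 _
    positivity)
  rw [smul_eq_mul, habs, e1, e2]
  have f1 : ((1+c)/(r^α+c)) ^ (-(1/α)) = ((r^α+c)/(1+c)) ^ (1/α) := by
    rw [Real.rpow_neg (by positivity), ← Real.inv_rpow (by positivity), inv_div]
  have f2 : (r^α*(1+c)/(r^α+c)) ^ (1/α-1)
      = (r^α*(1+c)/(r^α+c)) ^ (1/α) * (r^α*(1+c)/(r^α+c))⁻¹ := by
    rw [← Real.rpow_neg_one (r^α*(1+c)/(r^α+c)), ← Real.rpow_add (by positivity)]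
    congr 1 <;> ring
  have hAr : (r ^ α) ^ (1/α) = r := by
    rw [← Real.rpow_mul hr0.le]
    rw [show α * (1/α) = 1 by field_simp, Real.rpow_one]
  have f3 : ((r^α+c)/(1+c)) ^ (1/α) * (r^α*(1+c)/(r^α+c)) ^ (1/α) = r := by
    rw [← Real.mul_rpow (by positivity) (by positivity)]
    rw [show (r^α+c)/(1+c) * (r^α*(1+c)/(r^α+c)) = r ^ α by field_simp, hAr]
  have f4 : r ^ (α-1) * r = r ^ α := by
    rw [← Real.rpow_add_one hr0.ne' (α-1)]; norm_num
  have f5 : r ^ (α-1) = r ^ α / r := by rw [eq_div_iff hr0.ne']; exact f4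
  rw [f1, f2]
  rw [show ψ' r * (((r^α+c)/(1+c))^(1/α) * ((r^α*(1+c)/(r^α+c))^(1/α) * (r^α*(1+c)/(r^α+c))⁻¹))
      = (((r^α+c)/(1+c))^(1/α) * (r^α*(1+c)/(r^α+c))^(1/α)) * (ψ' r * (r^α*(1+c)/(r^α+c))⁻¹)
    from by ring, f3, hψ']
  dsimp only
  rw [f5]
  field_simp

end Aux

/-- Closed form of `∫₁^∞ ln(1 + c·r^{−α}) dr` in terms of `₂F₁`. -/
theorem integral_log_one_add_rpow_neg (α c : ℝ) (hα : 1 < α) (hc : 0 < c) :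
    ∫ r in Set.Ioi (1:ℝ), Real.log (1 + c * r ^ (-α))
      = -Real.log (1 + c)
        + (α * c / (α - 1)) *
          gaussHypergeometric (1 - 1/α) 1 (2 - 1/α) (-c) := by
  rw [gaussHypergeometric]
  open Set Filter in
  have hα0 : (0:ℝ) < α := by linarith
  have hb : (0:ℝ) < 1 - 1/α := by
    have : 1/α < 1 := by rw [div_lt_one hα0]; linarith
    linarith
  -- Gamma computation
  have hG : Real.Gamma (2 - 1/α) / (Real.Gamma 1 * Real.Gamma (2 - 1/α - 1)) = 1 - 1/α := by
    have h1 : (2:ℝ) - 1/α = (1 - 1/α) + 1 := by ring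
    rw [h1, Real.Gamma_add_one hb.ne', Real.Gamma_one, show (1:ℝ) - 1/α + 1 - 1 = 1 - 1/α by ring]
    rw [one_mul, mul_div_assoc, div_self (Real.Gamma_pos_of_pos hb).ne', mul_one]
  -- interval integral to Ioo integral
  have hII : (∫ t in (0:ℝ)..1, t ^ ((1:ℝ) - 1) * (1 - t) ^ (2 - 1/α - 1 - 1) * (1 - (-c) * t) ^ (-(1 - 1/α)))
      = ∫ t in Ioo (0:ℝ) 1, (1 - t) ^ (-(1/α)) * (1 + c * t) ^ (1/α - 1) := by
    rw [intervalIntegral.integral_of_le zero_le_one, integral_Ioc_eq_integral_Ioo]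
    congr 1
    funext t
    simp only [sub_self, Real.rpow_zero, one_mul, neg_mul, sub_neg_eq_add,
      show (2:ℝ) - 1/α - 1 - 1 = -(1/α) by ring, show -((1:ℝ) - 1/α) = 1/α - 1 by ring]
  -- FTC part
  have hFTC : (∫ r in Ioi (1:ℝ), (Real.log (1 + c * r ^ (-α)) - α * c / (r ^ α + c)))
      = -Real.log (1 + c) := by
    have := integral_Ioi_of_hasDerivAt_of_tendsto'
      (f := fun x : ℝ => x * Real.log (1 + c * x ^ (-α)))
      (f' := fun r : ℝ => Real.log (1 + c * r ^ (-α)) - α * c / (r ^ α + c))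
      (a := 1) (m := 0)
      (fun x hx => aux_derivF hα hc hx) ((aux_int_f hα hc).sub (aux_int_g hα hc)) (aux_tendstoF hα hc)
    rw [this]
    simp [Real.one_rpow]
  have int_fg : IntegrableOn (fun r : ℝ => Real.log (1 + c * r ^ (-α)) - α * c / (r ^ α + c)) (Ioi 1) :=
    (aux_int_f hα hc).sub (aux_int_g hα hc)
  -- assemble
  have hsplit : (∫ r in Ioi (1:ℝ), Real.log (1 + c * r ^ (-α)))
      = (∫ r in Ioi (1:ℝ), (Real.log (1 + c * r ^ (-α)) - α * c / (r ^ α + c)))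
        + ∫ r in Ioi (1:ℝ), α * c / (r ^ α + c) := by
    rw [← integral_add int_fg (aux_int_g hα hc)]
    congr 1
    funext r
    ring
  rw [hsplit, hFTC, hG, hII, aux_subst hα hc]
  congr 1
  have hgc : (∫ r in Ioi (1:ℝ), α * c / (r ^ α + c))
      = c * ∫ r in Ioi (1:ℝ), α / (r ^ α + c) := by
    rw [← integral_const_mul]
    congr 1
    funext r
    ring
  rw [hgc]
  rw [show α * c / (α - 1) * ((1 - 1/α) * ∫ r in Ioi (1:ℝ), α / (r ^ α + c))
      = (α * c / (α - 1) * (1 - 1/α)) * ∫ r in Ioi (1:ℝ), α / (r ^ α + c) by ring]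
  congr 1
  have hne : α - 1 ≠ 0 := by intro h; linarith [sub_eq_zero.mp h]
  field_simp
end

section
/- For α > 2 and c > 0, ∫₁^∞ r·ln(1 + c·r^{−α}) dr = −(1/2)·ln(1+c) + (αc/(2(α−2)))·₂F₁(1 − 2/α, 1; 2 − 2/α; −c). -/
open MeasureTheory Real Set

section aux
variable {α c : ℝ} (hα : 2 < α) (hc : 0 < c)

lemma hα0 (hα : 2 < α) : (0:ℝ) < α := by linarith

-- positivity of denominator
lemma denom_pos (hc : 0 < c) {r : ℝ} (hr : 0 < r) : 0 < 1 + c * r ^ (-α) := by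
  have := Real.rpow_pos_of_pos hr (-α)
  positivity

-- integrand A
noncomputable def A (α c : ℝ) : ℝ → ℝ := fun r => r * Real.log (1 + c * r ^ (-α))
noncomputable def B (α c : ℝ) : ℝ → ℝ := fun r => r ^ (1-α) / (1 + c * r ^ (-α))

lemma contD (hc : 0 < c) : ContinuousOn (fun r : ℝ => 1 + c * r ^ (-α)) (Ioi 1) := by
  refine continuousOn_const.add (continuousOn_const.mul ?_)
  exact ContinuousOn.rpow_const continuousOn_id
    (fun x hx => Or.inl (ne_of_gt (lt_trans zero_lt_one hx)))

lemma contA (hc : 0 < c) : ContinuousOn (A α c) (Ioi 1) := by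
  refine continuousOn_id.mul (ContinuousOn.log (contD hc) ?_)
  intro x hx; exact (denom_pos hc (lt_trans zero_lt_one hx)).ne'

lemma contB (hc : 0 < c) : ContinuousOn (B α c) (Ioi 1) := by
  refine ContinuousOn.div ?_ (contD hc)
    (fun x hx => (denom_pos hc (lt_trans zero_lt_one hx)).ne')
  exact ContinuousOn.rpow_const continuousOn_id
    (fun x hx => Or.inl (ne_of_gt (lt_trans zero_lt_one hx)))

lemma intA (hα : 2 < α) (hc : 0 < c) : IntegrableOn (A α c) (Ioi 1) := by
  have hint : IntegrableOn (fun r : ℝ => c * r ^ (1-α)) (Ioi 1) :=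
    (integrableOn_Ioi_rpow_of_lt (by linarith) zero_lt_one).const_mul c
  refine hint.mono' ((contA hc).aestronglyMeasurable measurableSet_Ioi) ?_
  rw [ae_restrict_iff' measurableSet_Ioi]
  filter_upwards with r hr
  have hr0 : (0:ℝ) < r := lt_trans zero_lt_one hr
  have hx : (0:ℝ) < c * r ^ (-α) := by positivity
  have hlog0 : 0 ≤ Real.log (1 + c * r ^ (-α)) :=
    Real.log_nonneg (by linarith)
  have hlog : Real.log (1 + c * r ^ (-α)) ≤ c * r ^ (-α) := by
    have := Real.log_le_sub_one_of_pos (denom_pos (α := α) hc hr0)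
    linarith
  have : ‖A α c r‖ = r * Real.log (1 + c * r ^ (-α)) := by
    simp only [A, Real.norm_eq_abs]; exact abs_of_nonneg (mul_nonneg hr0.le hlog0)
  rw [this]
  calc r * Real.log (1 + c * r ^ (-α)) ≤ r * (c * r ^ (-α)) := by
        exact mul_le_mul_of_nonneg_left hlog hr0.le
    _ = c * r ^ (1-α) := by
        rw [show (1:ℝ) - α = 1 + -α from by ring, Real.rpow_add hr0, Real.rpow_one]; ring

lemma intB (hα : 2 < α) (hc : 0 < c) : IntegrableOn (B α c) (Ioi 1) := by
  have hint : IntegrableOn (fun r : ℝ => r ^ (1-α)) (Ioi 1) :=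
    integrableOn_Ioi_rpow_of_lt (by linarith) zero_lt_one
  refine hint.mono' ((contB hc).aestronglyMeasurable measurableSet_Ioi) ?_
  rw [ae_restrict_iff' measurableSet_Ioi]
  filter_upwards with r hr
  have hr0 : (0:ℝ) < r := lt_trans zero_lt_one hr
  have hrp : (0:ℝ) < r ^ (1-α) := Real.rpow_pos_of_pos hr0 _
  have hd : (0:ℝ) < 1 + c * r ^ (-α) := denom_pos hc hr0
  have hd1 : (1:ℝ) ≤ 1 + c * r ^ (-α) := by
    have : (0:ℝ) < c * r ^ (-α) := by positivity
    linarith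
  have : ‖B α c r‖ = r ^ (1-α) / (1 + c * r ^ (-α)) := by
    simp only [B, Real.norm_eq_abs]; exact abs_of_nonneg (by positivity)
  rw [this]
  exact div_le_self hrp.le hd1

lemma deriv_G (hα : 2 < α) (hc : 0 < c) {r : ℝ} (hr : 0 < r) :
    HasDerivAt (fun r : ℝ => r^2/2 * Real.log (1 + c * r ^ (-α)))
      (A α c r - (α * c / 2) * B α c r) r := by
  have hD := denom_pos (α := α) hc hr
  have h1 : HasDerivAt (fun r : ℝ => r ^ (-α)) (-α * r ^ (-α-1)) r :=
    Real.hasDerivAt_rpow_const (Or.inl hr.ne')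
  have h3 : HasDerivAt (fun r : ℝ => Real.log (1 + c * r ^ (-α)))
      (c * (-α * r ^ (-α-1)) / (1 + c * r ^ (-α))) r :=
    ((h1.const_mul c).const_add 1).log hD.ne'
  have h4 : HasDerivAt (fun r : ℝ => r^2/2) (2 * r ^ 1 / 2) r :=
    (hasDerivAt_pow 2 r).div_const 2
  have h5 := h4.fun_mul h3
  refine h5.congr_deriv ?_
  have key : (r:ℝ)^2 * r ^ (-α-1) = r ^ (1-α) := by
    rw [← Real.rpow_natCast r 2, ← Real.rpow_add hr]; congr 1; push_cast; ring
  simp only [A, B, pow_one]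
  rw [← key]
  ring

lemma step3 (hα : 2 < α) (hc : 0 < c) :
    ∫ r in Ioi (1:ℝ), A α c r
      = -(1/2) * Real.log (1 + c) + (α * c / 2) * ∫ r in Ioi (1:ℝ), B α c r := by
  have hint : IntegrableOn (fun r => A α c r - (α*c/2) * B α c r) (Ioi 1) :=
    (intA hα hc).sub ((intB hα hc).const_mul _)
  have htends : Filter.Tendsto (fun r : ℝ => r^2/2 * Real.log (1 + c * r ^ (-α)))
      Filter.atTop (nhds 0) := by
    have hlim : Filter.Tendsto (fun r : ℝ => c/2 * r ^ (-(α-2))) Filter.atTop (nhds 0) := by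
      have := (tendsto_rpow_neg_atTop (by linarith : (0:ℝ) < α - 2)).const_mul (c/2)
      simpa using this
    apply squeeze_zero' ?_ ?_ hlim
    · filter_upwards [Filter.eventually_gt_atTop (0:ℝ)] with r hr
      have hD := denom_pos (α := α) hc hr
      have := Real.log_nonneg (by nlinarith [Real.rpow_pos_of_pos hr (-α)] :
        (1:ℝ) ≤ 1 + c * r ^ (-α))
      positivity
    · filter_upwards [Filter.eventually_gt_atTop (0:ℝ)] with r hr
      have hD := denom_pos (α := α) hc hr
      have hlog : Real.log (1 + c * r ^ (-α)) ≤ c * r ^ (-α) := by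
        have := Real.log_le_sub_one_of_pos hD; linarith
      have key : (r:ℝ)^2 * r ^ (-α) = r ^ (-(α-2)) := by
        rw [← Real.rpow_natCast r 2, ← Real.rpow_add hr]; congr 1; push_cast; ring
      calc r^2/2 * Real.log (1 + c * r ^ (-α)) ≤ r^2/2 * (c * r ^ (-α)) := by
            apply mul_le_mul_of_nonneg_left hlog (by positivity)
        _ = c/2 * r ^ (-(α-2)) := by rw [← key]; ring
  have hFTC := integral_Ioi_of_hasDerivAt_of_tendsto
    (f := fun r : ℝ => r^2/2 * Real.log (1 + c * r ^ (-α)))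
    (f' := fun r => A α c r - (α*c/2) * B α c r) (a := 1) (m := 0)
    (deriv_G hα hc one_pos).continuousAt.continuousWithinAt
    (fun x hx => deriv_G hα hc (lt_trans zero_lt_one hx)) hint htends
  rw [integral_sub (intA hα hc) ((intB hα hc).const_mul _),
    integral_const_mul] at hFTC
  simp only [Real.one_rpow, one_pow, mul_one] at hFTC
  linarith [hFTC]

lemma step4 (hα : 2 < α) (hc : 0 < c) :
    ∫ u in Ioo (0:ℝ) 1, u ^ (-(2/α)) / (1 + c * u)
      = α * ∫ r in Ioi (1:ℝ), B α c r := by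
  have hα0 : (0:ℝ) < α := by linarith
  have himg : (fun r : ℝ => r ^ (-α)) '' (Ioi 1) = Ioo 0 1 := by
    ext u
    constructor
    · rintro ⟨r, hr, rfl⟩
      have hr0 : (0:ℝ) < r := lt_trans zero_lt_one hr
      exact ⟨Real.rpow_pos_of_pos hr0 _,
        Real.rpow_lt_one_of_one_lt_of_neg hr (by linarith)⟩
    · rintro ⟨hu0, hu1⟩
      refine ⟨u ^ (-1/α), ?_, ?_⟩
      · rw [mem_Ioi]
        rw [Real.one_lt_rpow_iff_of_pos hu0]
        have hp : 0 < 1/α := by positivity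
        refine Or.inr ⟨hu1, by rw [neg_div] at *; linarith⟩
      · show (u ^ (-1/α)) ^ (-α) = u
        rw [← Real.rpow_mul hu0.le, show (-1/α)*(-α) = 1 from by field_simp, Real.rpow_one]
  have hderiv : ∀ x ∈ Ioi (1:ℝ), HasDerivWithinAt (fun r : ℝ => r ^ (-α))
      (-α * x ^ (-α-1)) (Ioi 1) x := by
    intro x hx
    exact (Real.hasDerivAt_rpow_const (Or.inl (lt_trans zero_lt_one hx).ne')).hasDerivWithinAt
  have hinj : InjOn (fun r : ℝ => r ^ (-α)) (Ioi 1) := by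
    have : StrictAntiOn (fun r : ℝ => r ^ (-α)) (Ioi 1) := by
      intro x hx y hy hxy
      have hx0 : (0:ℝ) < x := lt_trans zero_lt_one hx
      have hy0 : (0:ℝ) < y := lt_trans zero_lt_one hy
      simp only
      rw [Real.rpow_neg hx0.le, Real.rpow_neg hy0.le]
      exact inv_strictAnti₀ (Real.rpow_pos_of_pos hx0 _)
        (Real.rpow_lt_rpow hx0.le hxy hα0)
    exact this.injOn
  rw [← himg,
    integral_image_eq_integral_abs_deriv_smul measurableSet_Ioi hderiv hinj]
  rw [← integral_const_mul]
  apply setIntegral_congr_fun measurableSet_Ioi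
  intro x hx
  have hx0 : (0:ℝ) < x := lt_trans zero_lt_one hx
  have hD := denom_pos (α := α) hc hx0
  have habs : |(-α * x ^ (-α-1))| = α * x ^ (-α-1) := by
    rw [abs_of_nonpos (by nlinarith [Real.rpow_pos_of_pos hx0 (-α-1)])]; ring
  have hpow : (x ^ (-α)) ^ (-(2/α)) = x ^ (2:ℝ) := by
    rw [← Real.rpow_mul hx0.le]
    congr 1
    field_simp
  have key : x ^ (-α-1) * x ^ (2:ℝ) = x ^ (1-α) := by
    rw [← Real.rpow_add hx0]; congr 1; ring
  simp only [smul_eq_mul, B]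
  rw [habs, hpow, ← key]
  ring

lemma step5 (hα : 2 < α) (hc : 0 < c) :
    ∫ t in Ioo (0:ℝ) 1, (1-t) ^ (-(2/α)) * (1 + c*t) ^ (2/α - 1)
      = ∫ u in Ioo (0:ℝ) 1, u ^ (-(2/α)) / (1 + c * u) := by
  have h1c : (0:ℝ) < 1 + c := by linarith
  set φ : ℝ → ℝ := fun t => (1-t)/(1+c*t) with hφ
  have hDpos : ∀ t : ℝ, 0 < t → (0:ℝ) < 1 + c*t := fun t ht => by nlinarith
  have hsub : ∀ t ∈ Ioo (0:ℝ) 1, φ t ∈ Ioo (0:ℝ) 1 := by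
    rintro t ⟨ht0, ht1⟩
    have hD := hDpos t ht0
    constructor
    · exact div_pos (by linarith) hD
    · rw [div_lt_one hD]; nlinarith
  have he : ∀ t : ℝ, 0 < t → 1 + c * φ t = (1+c)/(1+c*t) := by
    intro t ht
    have hD := hDpos t ht
    rw [hφ]
    field_simp
    ring
  have hinvol : ∀ t ∈ Ioo (0:ℝ) 1, φ (φ t) = t := by
    rintro t ⟨ht0, ht1⟩
    have hD := hDpos t ht0
    have hφt := hsub t ⟨ht0, ht1⟩
    have e2 : 1 - φ t = t*(1+c)/(1+c*t) := by rw [hφ]; field_simp; ring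
    show (1 - φ t) / (1 + c * φ t) = t
    rw [e2, he t ht0]
    field_simp
  have himg : φ '' (Ioo 0 1) = Ioo 0 1 := by
    ext u
    constructor
    · rintro ⟨t, ht, rfl⟩; exact hsub t ht
    · intro hu; exact ⟨φ u, hsub u hu, hinvol u hu⟩
  have hinj : InjOn φ (Ioo 0 1) := by
    intro x hx y hy h
    rw [← hinvol x hx, ← hinvol y hy, h]
  have hderiv : ∀ t ∈ Ioo (0:ℝ) 1, HasDerivWithinAt φ
      (-(1+c)/(1+c*t)^2) (Ioo 0 1) t := by
    rintro t ⟨ht0, ht1⟩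
    have hD := hDpos t ht0
    have hnum : HasDerivAt (fun t : ℝ => 1 - t) (-1) t := by
      simpa using (hasDerivAt_id t).const_sub (1:ℝ)
    have hden : HasDerivAt (fun t : ℝ => 1 + c*t) c t := by
      simpa using ((hasDerivAt_id t).const_mul c).const_add (1:ℝ)
    have := hnum.div hden hD.ne'
    have heq : ((-1) * (1 + c*t) - (1-t) * c)/(1+c*t)^2 = -(1+c)/(1+c*t)^2 := by ring
    rw [heq] at this
    exact this.hasDerivWithinAt
  conv_rhs => rw [← himg]
  rw [integral_image_eq_integral_abs_deriv_smul measurableSet_Ioo hderiv hinj]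
  symm
  apply setIntegral_congr_fun measurableSet_Ioo
  rintro t ⟨ht0, ht1⟩
  have hD := hDpos t ht0
  have habs : |(-(1+c)/(1+c*t)^2)| = (1+c)/(1+c*t)^2 := by
    rw [abs_div, abs_neg, abs_of_pos h1c, abs_of_pos (pow_pos hD 2)]
  have hrpow : (φ t) ^ (-(2/α)) = (1-t) ^ (-(2/α)) * (1+c*t) ^ (2/α) := by
    rw [hφ]
    show ((1-t)/(1+c*t)) ^ (-(2/α)) = _
    rw [Real.div_rpow (by linarith) hD.le, Real.rpow_neg hD.le (2/α), div_eq_mul_inv, inv_inv]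
  have hsplit : (1+c*t) ^ (2/α - 1) = (1+c*t) ^ (2/α) / (1+c*t) := by
    rw [Real.rpow_sub hD, Real.rpow_one]
  simp only [smul_eq_mul]
  rw [habs, hrpow, he t ht0, hsplit]
  have hne2 : ((1:ℝ)+c*t)^2 ≠ 0 := (pow_pos hD 2).ne'
  field_simp

end aux

/-- Closed form of `∫₁^∞ r·ln(1 + c·r^{−α}) dr` in terms of `₂F₁`. -/
theorem integral_mul_log_one_add_rpow_neg (α c : ℝ) (hα : 2 < α) (hc : 0 < c) :
    ∫ r in Set.Ioi (1:ℝ), r * Real.log (1 + c * r ^ (-α))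
      = -(1/2) * Real.log (1 + c)
        + (α * c / (2 * (α - 2))) *
          gaussHypergeometric (1 - 2/α) 1 (2 - 2/α) (-c) := by
  have hα0 : (0:ℝ) < α := by linarith
  have hβ : 0 < 2/α := by positivity
  have hβ1 : 2/α < 1 := by rw [div_lt_one hα0]; linarith
  -- hypergeometric simplification
  have hG : gaussHypergeometric (1 - 2/α) 1 (2 - 2/α) (-c)
      = (1 - 2/α) * ∫ t in Ioo (0:ℝ) 1, (1-t) ^ (-(2/α)) * (1 + c*t) ^ (2/α - 1) := by
    unfold gaussHypergeometric
    rw [intervalIntegral.integral_of_le one_pos.le, integral_Ioc_eq_integral_Ioo]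
    have h1 : Real.Gamma (2 - 2/α) = (1 - 2/α) * Real.Gamma (1 - 2/α) := by
      rw [show (2:ℝ) - 2/α = (1 - 2/α) + 1 by ring, Real.Gamma_add_one (by linarith)]
    have h2 : Real.Gamma (1 - 2/α) ≠ 0 := (Real.Gamma_pos_of_pos (by linarith)).ne'
    rw [h1, Real.Gamma_one, show (2:ℝ) - 2/α - 1 = 1 - 2/α from by ring]
    congr 1
    · rw [one_mul, mul_div_assoc, div_self h2, mul_one]
    · apply setIntegral_congr_fun measurableSet_Ioo
      intro t ht
      have e1 : (1:ℝ) - 2/α - 1 = -(2/α) := by ring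
      have e2 : -((1:ℝ) - 2/α) = 2/α - 1 := by ring
      simp only [sub_self, Real.rpow_zero, one_mul, e1, e2, neg_mul, sub_neg_eq_add]
  rw [show (∫ r in Set.Ioi (1:ℝ), r * Real.log (1 + c * r ^ (-α)))
      = ∫ r in Ioi (1:ℝ), A α c r from rfl, hG, step3 hα hc, step5 hα hc, step4 hα hc]
  have hα2 : α - 2 ≠ 0 := by linarith
  have hαne : α ≠ 0 := by linarith
  field_simp
end
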